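/- Let W be an n×n complex positive semidefinite matrix with rank(W) ≤ 1, G an n×e complex matrix, σ > 0 and R ≥ 0 real numbers. Then det(I_e + σ⁻² Gᴴ W G) ≤ 2^R if and only if Gᴴ W G ⪯ σ² (2^R − 1) · I_e. -/

import Mathlib

open Matrix ComplexOrder

private lemma prod_one_add_eq {e : ℕ} (μ : Fin e → ℝ) (c : ℝ)
    (key : ∀ i j, μ i ≠ 0 → μ j ≠ 0 → i = j) :
    ∏ i, (1 + c * μ i) = 1 + c * ∑ i, μ i := by
  by_cases h : ∀ i, μ i = 0
  · simp [h]
  · push_neg at h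
    obtain ⟨i0, hi0⟩ := h
    have hz : ∀ j ∈ Finset.univ, j ≠ i0 → μ j = 0 := by
      intro j _ hj
      by_contra hμ
      exact hj (key j i0 hμ hi0)
    rw [Finset.prod_eq_single i0 (fun j hj hji => by simp [hz j hj hji]) (by simp),
      Finset.sum_eq_single i0 (fun j hj hji => hz j hj hji) (by simp)]

/-- Let `W` be an `n × n` complex PSD matrix with `rank W ≤ 1`, `G` an `n × e`
complex matrix, `σ > 0` and `R ≥ 0`. Then `det (I + σ⁻² Gᴴ W G) ≤ 2 ^ R` if
and only if `Gᴴ W G ⪯ σ² (2 ^ R - 1) • I`. -/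
theorem det_le_iff_loewner_of_rank_le_one (n e : ℕ) (W : Matrix (Fin n) (Fin n) ℂ)
    (hW : W.PosSemidef) (hrank : W.rank ≤ 1) (G : Matrix (Fin n) (Fin e) ℂ)
    (σ R : ℝ) (hσ : 0 < σ) (hR : 0 ≤ R) :
    ((1 : Matrix (Fin e) (Fin e) ℂ)
        + (((σ ^ 2)⁻¹ : ℝ) : ℂ) • (Gᴴ * W * G)).det ≤ (((2 : ℝ) ^ R : ℝ) : ℂ) ↔
      (((σ ^ 2 * ((2 : ℝ) ^ R - 1) : ℝ) : ℂ) • (1 : Matrix (Fin e) (Fin e) ℂ)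
        - Gᴴ * W * G).PosSemidef := by
  have hσ2 : (0:ℝ) < σ ^ 2 := by positivity
  have h2R : (1:ℝ) ≤ (2:ℝ) ^ R := Real.one_le_rpow one_le_two hR
  set t : ℝ := σ ^ 2 * ((2:ℝ) ^ R - 1) with ht
  have ht0 : 0 ≤ t := by
    have : (0:ℝ) ≤ (2:ℝ) ^ R - 1 := by linarith
    positivity
  have hA : (Gᴴ * W * G).PosSemidef := hW.conjTranspose_mul_mul_same G
  have hH : (Gᴴ * W * G).IsHermitian := hA.1
  set μ : Fin e → ℝ := hH.eigenvalues with hμdef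
  have hμ0 : ∀ i, 0 ≤ μ i := fun i => hA.eigenvalues_nonneg i
  have hrA : (Gᴴ * W * G).rank ≤ 1 :=
    le_trans (le_trans (Matrix.rank_mul_le_left _ G) (Matrix.rank_mul_le_right Gᴴ W)) hrank
  have key : ∀ i j, μ i ≠ 0 → μ j ≠ 0 → i = j := by
    intro i j hi hj
    have hcard : Fintype.card {i // μ i ≠ 0} ≤ 1 := hH.rank_eq_card_non_zero_eigs ▸ hrA
    exact congrArg Subtype.val (Fintype.card_le_one_iff.mp hcard ⟨i, hi⟩ ⟨j, hj⟩)
  set U : Matrix (Fin e) (Fin e) ℂ := (hH.eigenvectorUnitary : Matrix (Fin e) (Fin e) ℂ)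
    with hUdef
  have hU1 : U * star U = 1 := (Matrix.mem_unitaryGroup_iff).mp hH.eigenvectorUnitary.2
  have hU2 : star U * U = 1 := (Matrix.mem_unitaryGroup_iff').mp hH.eigenvectorUnitary.2
  set D : Matrix (Fin e) (Fin e) ℂ := Matrix.diagonal (fun i => (μ i : ℂ)) with hDdef
  have hspec : Gᴴ * W * G = U * D * star U := by
    have := hH.spectral_theorem
    rw [Unitary.conjStarAlgAut_apply] at this
    exact this
  -- determinant computation
  have hdet : ((1 : Matrix (Fin e) (Fin e) ℂ)
      + (((σ ^ 2)⁻¹ : ℝ) : ℂ) • (Gᴴ * W * G)).det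
      = ((1 + (σ ^ 2)⁻¹ * ∑ i, μ i : ℝ) : ℂ) := by
    have h1 : (1 : Matrix (Fin e) (Fin e) ℂ) + (((σ ^ 2)⁻¹ : ℝ) : ℂ) • (Gᴴ * W * G)
        = U * (1 + (((σ ^ 2)⁻¹ : ℝ) : ℂ) • D) * star U := by
      rw [Matrix.mul_add, Matrix.add_mul, Matrix.mul_one, hU1, hspec,
        Matrix.mul_smul, Matrix.smul_mul]
    rw [h1, Matrix.det_mul_right_comm, hU1, one_mul]
    have h2 : (1 : Matrix (Fin e) (Fin e) ℂ) + (((σ ^ 2)⁻¹ : ℝ) : ℂ) • D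
        = Matrix.diagonal (fun i => (1 : ℂ) + (((σ ^ 2)⁻¹ : ℝ) : ℂ) * (μ i : ℂ)) := by
      rw [hDdef, ← Matrix.diagonal_one, ← Matrix.diagonal_smul, ← Matrix.diagonal_add]
      rfl
    rw [h2, Matrix.det_diagonal, ← prod_one_add_eq μ ((σ ^ 2)⁻¹) key]
    push_cast
    ring_nf
  -- Loewner condition characterization
  have hpsd : (((t : ℝ) : ℂ) • (1 : Matrix (Fin e) (Fin e) ℂ) - Gᴴ * W * G).PosSemidef
      ↔ ∀ i, μ i ≤ t := by
    have h1 : ((t : ℝ) : ℂ) • (1 : Matrix (Fin e) (Fin e) ℂ) - Gᴴ * W * G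
        = U * Matrix.diagonal (fun i => ((t - μ i : ℝ) : ℂ)) * star U := by
      have ht1 : ((t : ℝ) : ℂ) • (1 : Matrix (Fin e) (Fin e) ℂ)
          = U * (((t : ℝ) : ℂ) • (1 : Matrix (Fin e) (Fin e) ℂ)) * star U := by
        rw [Matrix.mul_smul, Matrix.smul_mul, Matrix.mul_one, hU1]
      rw [hspec]
      calc ((t : ℝ) : ℂ) • (1 : Matrix (Fin e) (Fin e) ℂ) - U * D * star U
          = U * (((t : ℝ) : ℂ) • (1 : Matrix (Fin e) (Fin e) ℂ) - D) * star U := by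
            rw [Matrix.mul_sub, Matrix.sub_mul, ← ht1]
        _ = U * Matrix.diagonal (fun i => ((t - μ i : ℝ) : ℂ)) * star U := by
            congr 2
            ext i j
            rcases eq_or_ne i j with rfl | hij
            · simp [Matrix.sub_apply, hDdef]
            · simp [Matrix.sub_apply, hDdef, Matrix.diagonal_apply_ne _ hij, Matrix.one_apply_ne hij]
    rw [h1]
    constructor
    · intro hps i
      have h2 : (star U * (U * Matrix.diagonal (fun i => ((t - μ i : ℝ) : ℂ)) * star U)
          * (star U)ᴴ).PosSemidef := hps.mul_mul_conjTranspose_same (star U)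
      have h3 : star U * (U * Matrix.diagonal (fun i => ((t - μ i : ℝ) : ℂ)) * star U)
          * (star U)ᴴ = Matrix.diagonal (fun i => ((t - μ i : ℝ) : ℂ)) := by
        rw [Matrix.star_eq_conjTranspose, Matrix.conjTranspose_conjTranspose,
          ← Matrix.star_eq_conjTranspose]
        rw [← mul_assoc, ← mul_assoc, hU2, one_mul, mul_assoc, hU2, mul_one]
      rw [h3] at h2
      have h4 := Matrix.posSemidef_diagonal_iff.mp h2 i
      have h5 : (0:ℝ) ≤ t - μ i := by
        have := Complex.real_le_real.mp (by simpa using h4)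
        linarith
      linarith
    · intro hle
      have hd : (Matrix.diagonal (fun i => ((t - μ i : ℝ) : ℂ))).PosSemidef := by
        refine Matrix.posSemidef_diagonal_iff.mpr fun i => ?_
        rw [show ((0:ℂ)) = ((0:ℝ):ℂ) by norm_num]
        exact Complex.real_le_real.mpr (by linarith [hle i])
      have := hd.mul_mul_conjTranspose_same U
      simpa [Matrix.star_eq_conjTranspose, mul_assoc] using this
  rw [hdet, hpsd, Complex.real_le_real]
  constructor
  · intro hsum i
    have hs : ∑ j, μ j ≤ t := by
      have h2 : (σ ^ 2)⁻¹ * ∑ j, μ j ≤ (2:ℝ) ^ R - 1 := by linarith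
      have h3 := mul_le_mul_of_nonneg_left h2 hσ2.le
      rw [ht]
      calc ∑ j, μ j = σ ^ 2 * ((σ ^ 2)⁻¹ * ∑ j, μ j) := by field_simp
        _ ≤ σ ^ 2 * ((2:ℝ) ^ R - 1) := h3
    have hsingle : μ i ≤ ∑ j, μ j :=
      Finset.single_le_sum (fun j _ => hμ0 j) (Finset.mem_univ i)
    linarith
  · intro hle
    by_cases h : ∀ i, μ i = 0
    · simp [h]
      nlinarith
    · push_neg at h
      obtain ⟨i0, hi0⟩ := h
      have hsum : ∑ i, μ i = μ i0 := by
        refine Finset.sum_eq_single i0 (fun j _ hj => ?_) (by simp)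
        by_contra hμ
        exact hj (key j i0 hμ hi0)
      rw [hsum]
      have := hle i0
      rw [ht] at this
      have h2 : (σ ^ 2)⁻¹ * μ i0 ≤ (2:ℝ) ^ R - 1 := by
        rw [inv_mul_le_iff₀ hσ2]
        linarith
      linarith
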